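/- There exist injective point configurations x, y : Fin 10 → EuclideanSpace ℝ (Fin 3) and a single multiset M of real numbers such that: (1) for every i ∈ Fin 10, the multiset {dist (x i) (x j) : j ∈ Fin 10} equals M, and for every i ∈ Fin 10, the multiset {dist (y i) (y j) : j ∈ Fin 10} equals M; yet (2) x and y are not congruent, i.e., there is no permutation σ of Fin 10 with dist (x i) (x j) = dist (y (σ i)) (y (σ j)) for all i, j. (Such a pair can be obtained from two 10-vertex subsets of a regular dodecahedron, one containing two regular pentagons and the other forming a ring.) -/

import Mathlib

namespace TenPoint

/-- `(a, b)` represents `a + b√5`. -/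
noncomputable def emb (u : ℤ × ℤ) : ℝ := (u.1 : ℝ) + (u.2 : ℝ) * Real.sqrt 5

def ksub (u v : ℤ × ℤ) : ℤ × ℤ := (u.1 - v.1, u.2 - v.2)

def ksq (u : ℤ × ℤ) : ℤ × ℤ := (u.1 * u.1 + 5 * (u.2 * u.2), 2 * (u.1 * u.2))

def Q (p q : Fin 3 → ℤ × ℤ) : ℤ × ℤ :=
  ksq (ksub (p 0) (q 0)) + ksq (ksub (p 1) (q 1)) + ksq (ksub (p 2) (q 2))

noncomputable def pt (p : Fin 3 → ℤ × ℤ) : EuclideanSpace ℝ (Fin 3) := WithLp.toLp 2 (fun k => emb (p k))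

lemma sqrt5_sq : Real.sqrt 5 * Real.sqrt 5 = 5 := Real.mul_self_sqrt (by norm_num)

lemma emb_inj : Function.Injective emb := by
  intro u v h
  have h5 : Irrational (Real.sqrt 5) := (by norm_num : Nat.Prime 5).irrational_sqrt
  unfold emb at h
  have hb : u.2 = v.2 := by
    by_contra hb
    apply h5
    refine ⟨((v.1 - u.1 : ℤ) : ℚ) / ((u.2 - v.2 : ℤ) : ℚ), ?_⟩
    have hne : ((u.2 : ℝ) - (v.2 : ℝ)) ≠ 0 := by
      intro h0
      exact hb (by exact_mod_cast sub_eq_zero.mp h0)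
    push_cast
    rw [div_eq_iff hne]
    linarith
  have : (u.1 : ℝ) = v.1 := by rw [hb] at h; linarith
  have ha : u.1 = v.1 := by exact_mod_cast this
  exact Prod.ext ha hb

lemma emb_ksq_ksub (u v : ℤ × ℤ) : emb (ksq (ksub u v)) = (emb u - emb v) ^ 2 := by
  simp only [emb, ksq, ksub]
  push_cast
  ring_nf
  rw [Real.sq_sqrt (by norm_num : (0:ℝ) ≤ 5)]
  ring

lemma emb_add (u v : ℤ × ℤ) : emb (u + v) = emb u + emb v := by
  simp only [emb, Prod.fst_add, Prod.snd_add]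
  push_cast; ring

lemma emb_Q (p q : Fin 3 → ℤ × ℤ) :
    emb (Q p q) = ∑ k : Fin 3, (pt p k - pt q k) ^ 2 := by
  simp only [Q, emb_add, emb_ksq_ksub, Fin.sum_univ_three, pt, PiLp.toLp_apply]

lemma emb_Q_nonneg (p q : Fin 3 → ℤ × ℤ) : 0 ≤ emb (Q p q) := by
  rw [emb_Q]; positivity

lemma dist_pt (p q : Fin 3 → ℤ × ℤ) :
    dist (pt p) (pt q) = Real.sqrt (emb (Q p q)) := by
  rw [EuclideanSpace.dist_eq, emb_Q]
  congr 1
  refine Finset.sum_congr rfl fun k _ => ?_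
  rw [Real.dist_eq, sq_abs]

def A : Fin 10 → Fin 3 → ℤ × ℤ :=
  ![![(2,0),(2,0),(2,0)], ![(2,0),(-2,0),(-2,0)], ![(-2,0),(2,0),(2,0)],
    ![(-2,0),(-2,0),(-2,0)], ![(0,0),(-1,1),(1,1)], ![(-1,1),(1,1),(0,0)],
    ![(-1,1),(-1,-1),(0,0)], ![(1,-1),(1,1),(0,0)], ![(0,0),(1,-1),(-1,-1)],
    ![(1,-1),(-1,-1),(0,0)]]

def B : Fin 10 → Fin 3 → ℤ × ℤ :=
  ![![(2,0),(2,0),(-2,0)], ![(2,0),(-2,0),(2,0)], ![(-2,0),(2,0),(-2,0)],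
    ![(-2,0),(-2,0),(2,0)], ![(1,1),(0,0),(-1,1)], ![(0,0),(-1,1),(-1,-1)],
    ![(-1,-1),(0,0),(-1,1)], ![(0,0),(1,-1),(1,1)], ![(1,1),(0,0),(1,-1)],
    ![(-1,-1),(0,0),(1,-1)]]

def M₀ : Multiset (ℤ × ℤ) :=
  {(0,0),(16,0),(16,0),(24,-8),(24,-8),(24,8),(24,8),(32,0),(32,0),(48,0)}

lemma rowA : ∀ i : Fin 10,
    Multiset.map (fun j => Q (A i) (A j)) (Finset.univ : Finset (Fin 10)).val = M₀ := by
  decide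

lemma rowB : ∀ i : Fin 10,
    Multiset.map (fun j => Q (B i) (B j)) (Finset.univ : Finset (Fin 10)).val = M₀ := by
  decide

lemma injQ_A : ∀ i j : Fin 10, Q (A i) (A j) = (0, 0) → i = j := by decide
lemma injQ_B : ∀ i j : Fin 10, Q (B i) (B j) = (0, 0) → i = j := by decide

lemma triple_A : Q (A 0) (A 2) = (16, 0) ∧ Q (A 0) (A 5) = (24, -8) ∧
    Q (A 2) (A 5) = (16, 0) := by decide

lemma no_triple_B : ∀ a b c : Fin 10,
    ¬ (Q (B a) (B b) = (16, 0) ∧ Q (B a) (B c) = (24, -8) ∧ Q (B b) (B c) = (16, 0)) := by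
  decide

lemma inj_of (C : Fin 10 → Fin 3 → ℤ × ℤ)
    (hC : ∀ i j : Fin 10, Q (C i) (C j) = (0, 0) → i = j) :
    Function.Injective (fun i => pt (C i)) := by
  intro i j h
  apply hC
  have h' : pt (C i) = pt (C j) := h
  have hd : dist (pt (C i)) (pt (C j)) = 0 := by rw [h', dist_self]
  rw [dist_pt] at hd
  have h0 : emb (Q (C i) (C j)) = 0 := by
    have := Real.sqrt_eq_zero (emb_Q_nonneg _ _) |>.mp hd
    exact this
  have : emb (Q (C i) (C j)) = emb (0, 0) := by
    rw [h0]; simp [emb]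
  exact emb_inj this

end TenPoint

open TenPoint in
/-- There are two injective 10-point configurations in `ℝ³` all of whose
nodes have the same unordered distance list `M`, yet the configurations are not
congruent. -/
theorem exists_noncongruent_ten_point_configs_with_same_distance_lists :
    ∃ (x y : Fin 10 → EuclideanSpace ℝ (Fin 3)) (M : Multiset ℝ),
      Function.Injective x ∧ Function.Injective y ∧
      (∀ i : Fin 10,
        Multiset.map (fun j => dist (x i) (x j)) (Finset.univ : Finset (Fin 10)).val = M) ∧
      (∀ i : Fin 10,
        Multiset.map (fun j => dist (y i) (y j)) (Finset.univ : Finset (Fin 10)).val = M) ∧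
      ¬ ∃ σ : Equiv.Perm (Fin 10),
          ∀ i j, dist (x i) (x j) = dist (y (σ i)) (y (σ j)) := by
  refine ⟨fun i => pt (A i), fun i => pt (B i),
    M₀.map (fun q => Real.sqrt (emb q)), inj_of A injQ_A, inj_of B injQ_B, ?_, ?_, ?_⟩
  · intro i
    have : (fun j => dist (pt (A i)) (pt (A j)))
        = (fun q => Real.sqrt (emb q)) ∘ (fun j => Q (A i) (A j)) := by
      funext j; exact dist_pt _ _
    rw [this, ← Multiset.map_map, rowA i]
  · intro i
    have : (fun j => dist (pt (B i)) (pt (B j)))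
        = (fun q => Real.sqrt (emb q)) ∘ (fun j => Q (B i) (B j)) := by
      funext j; exact dist_pt _ _
    rw [this, ← Multiset.map_map, rowB i]
  · rintro ⟨σ, h⟩
    have hQ : ∀ i j, Q (A i) (A j) = Q (B (σ i)) (B (σ j)) := by
      intro i j
      have := h i j
      rw [dist_pt, dist_pt] at this
      have hemb : emb (Q (A i) (A j)) = emb (Q (B (σ i)) (B (σ j))) :=
        (Real.sqrt_inj (emb_Q_nonneg _ _) (emb_Q_nonneg _ _)).mp this
      exact emb_inj hemb
    obtain ⟨h1, h2, h3⟩ := triple_A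
    exact no_triple_B (σ 0) (σ 2) (σ 5) ⟨hQ 0 2 ▸ h1, hQ 0 5 ▸ h2, hQ 2 5 ▸ h3⟩
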